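/- For the unit-weighted complete graph on N > 2 vertices and every f ∈ ℝ^N, (N - √N)‖f‖² ≤ ‖D_r f‖² + ‖D_r f̂‖² ≤ 2N ‖f‖²; equivalently, the smallest eigenvalue of L + Δ is at least N - √N and the largest is at most 2N. -/
import Mathlib


open Matrix BigOperators

private lemma complete_graph_Lqf (N : ℕ) (v : Fin N → ℝ) :
    v ⬝ᵥ (((N : ℝ) • (1 : Matrix (Fin N) (Fin N) ℝ) - Matrix.of fun _ _ => (1 : ℝ)) *ᵥ v)
      = N * (v ⬝ᵥ v) - (∑ i, v i)^2 := by
  rw [Matrix.sub_mulVec, dotProduct_sub, Matrix.smul_mulVec, Matrix.one_mulVec,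
    dotProduct_smul, smul_eq_mul]
  congr 1
  simp only [dotProduct, mulVec, Matrix.of_apply, sq, Finset.sum_mul]
  congr 1; ext i
  simp [dotProduct, Finset.mul_sum]

/-- for the unit-weighted complete graph on `N > 2` vertices, with
`L = N·I - O`, `Δ = diag(0, N, …, N) = χᵀ L χ`, and `f̂ = χᵀ f`, every `f : Fin N → ℝ`
satisfies `(N - √N)‖f‖² ≤ ‖D_r f‖² + ‖D_r f̂‖² ≤ 2N‖f‖²`
(where `‖D_r g‖² = ⟨g, L g⟩`). -/
theorem complete_graph_uncertainty (N : ℕ) (hN : 2 < N)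
    (χ : Matrix (Fin N) (Fin N) ℝ)
    (hχ : χᵀ * χ = 1)
    (hdiag : χᵀ * ((N : ℝ) • (1 : Matrix (Fin N) (Fin N) ℝ) - Matrix.of fun _ _ => (1 : ℝ)) * χ =
      Matrix.diagonal (fun i : Fin N => if (i : ℕ) = 0 then 0 else (N : ℝ))) :
    ∀ f : Fin N → ℝ,
      ((N : ℝ) - Real.sqrt N) * (f ⬝ᵥ f) ≤
        f ⬝ᵥ (((N : ℝ) • (1 : Matrix (Fin N) (Fin N) ℝ) - Matrix.of fun _ _ => (1 : ℝ)) *ᵥ f) +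
          (χᵀ *ᵥ f) ⬝ᵥ (((N : ℝ) • (1 : Matrix (Fin N) (Fin N) ℝ) - Matrix.of fun _ _ => (1 : ℝ))
            *ᵥ (χᵀ *ᵥ f)) ∧
      f ⬝ᵥ (((N : ℝ) • (1 : Matrix (Fin N) (Fin N) ℝ) - Matrix.of fun _ _ => (1 : ℝ)) *ᵥ f) +
          (χᵀ *ᵥ f) ⬝ᵥ (((N : ℝ) • (1 : Matrix (Fin N) (Fin N) ℝ) - Matrix.of fun _ _ => (1 : ℝ))
            *ᵥ (χᵀ *ᵥ f)) ≤
        2 * (N : ℝ) * (f ⬝ᵥ f) := by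
  intro f
  haveI : NeZero N := ⟨by omega⟩
  set L : Matrix (Fin N) (Fin N) ℝ :=
    (N : ℝ) • (1 : Matrix (Fin N) (Fin N) ℝ) - Matrix.of fun _ _ => (1 : ℝ) with hL
  set g : Fin N → ℝ := χᵀ *ᵥ f with hg
  have hχ' : χ * χᵀ = 1 := mul_eq_one_comm.mp hχ
  have hLD : L = χ * Matrix.diagonal (fun i : Fin N => if (i : ℕ) = 0 then 0 else (N : ℝ)) * χᵀ := by
    calc L = (χ * χᵀ) * L * (χ * χᵀ) := by rw [hχ']; simp
    _ = χ * (χᵀ * L * χ) * χᵀ := by noncomm_ring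
    _ = _ := by rw [hdiag]
  have hnorm : g ⬝ᵥ g = f ⬝ᵥ f := by
    rw [hg, dotProduct_mulVec, Matrix.vecMul_transpose, Matrix.mulVec_mulVec, hχ',
      Matrix.one_mulVec]
  have h0 : (0 : Fin N) ∈ Finset.univ := Finset.mem_univ _
  have hsplit : ∀ h : Fin N → ℝ,
      ∑ i, h i = (∑ i ∈ Finset.univ.erase 0, h i) + h 0 :=
    fun h => (Finset.sum_erase_add _ _ h0).symm
  have hval : ∀ i ∈ Finset.univ.erase (0 : Fin N),
      g i * ((if (i:ℕ) = 0 then (0:ℝ) else (N:ℝ)) * g i) = (N:ℝ) * (g i * g i) := by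
    intro i hi
    have hne : i ≠ 0 := Finset.ne_of_mem_erase hi
    have h2 : (i:ℕ) ≠ 0 := fun h => hne (Fin.ext (by simp [h]))
    rw [if_neg h2]; ring
  have hfLf : f ⬝ᵥ (L *ᵥ f)
      = (N : ℝ) * (g ⬝ᵥ g) - (N : ℝ) * (g 0 * g 0) := by
    rw [hLD, ← Matrix.mulVec_mulVec, ← Matrix.mulVec_mulVec, dotProduct_mulVec,
      ← Matrix.mulVec_transpose, ← hg]
    simp only [dotProduct, Matrix.mulVec_diagonal]
    rw [hsplit (fun i => g i * ((if (i:ℕ) = 0 then 0 else (N:ℝ)) * g i)),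
        hsplit (fun i => g i * g i), Finset.sum_congr rfl hval, ← Finset.mul_sum]
    simp only [Fin.val_zero, reduceIte]
    ring
  have hgLg : g ⬝ᵥ (L *ᵥ g) = N * (g ⬝ᵥ g) - (∑ i, g i)^2 := by
    rw [hL]; exact complete_graph_Lqf N g
  -- notation
  set a : ℝ := g 0 with ha
  set S' : ℝ := ∑ i ∈ Finset.univ.erase (0 : Fin N), g i with hS'
  set c : ℝ := ∑ i ∈ Finset.univ.erase (0 : Fin N), g i * g i with hc
  have hT : g ⬝ᵥ g = c + a * a := hsplit (fun i => g i * g i)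
  have hS : ∑ i, g i = S' + a := hsplit g
  have hcnn : 0 ≤ c := Finset.sum_nonneg fun i _ => mul_self_nonneg _
  -- Cauchy-Schwarz on the erased set
  have hcard : ((Finset.univ.erase (0 : Fin N)).card : ℝ) = (N : ℝ) - 1 := by
    rw [Finset.card_erase_of_mem h0, Finset.card_univ, Fintype.card_fin]
    have : 1 ≤ N := by omega
    push_cast [Nat.cast_sub this]
    ring
  have hCS : S' ^ 2 ≤ ((N : ℝ) - 1) * c := by
    have := Finset.sum_mul_sq_le_sq_mul_sq (Finset.univ.erase (0 : Fin N))
      (fun _ => (1 : ℝ)) g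
    simp only [one_mul, one_pow] at this
    rw [Finset.sum_const, nsmul_eq_mul, mul_one] at this
    calc S' ^ 2 ≤ ((Finset.univ.erase (0 : Fin N)).card : ℝ) *
          ∑ i ∈ Finset.univ.erase (0 : Fin N), g i ^ 2 := this
      _ = ((N : ℝ) - 1) * c := by
          rw [hcard]; congr 1; exact Finset.sum_congr rfl fun i _ => sq (g i) ▸ (sq (g i)).symm
  -- sqrt facts
  set r : ℝ := Real.sqrt N with hr
  have hr0 : 0 ≤ r := Real.sqrt_nonneg _
  have hr2 : r * r = (N : ℝ) := Real.mul_self_sqrt (by positivity)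
  have hr1 : 1 < r := by
    nlinarith [show (2:ℝ) < N by exact_mod_cast hN]
  rw [hfLf, hgLg, ← hnorm, hT, hS]
  constructor
  · nlinarith [mul_nonneg hr0 (sub_nonneg.mpr hCS), sq_nonneg (S' - (r - 1) * a),
      mul_nonneg (le_of_lt (sub_pos.mpr hr1)) (mul_self_nonneg a), sub_pos.mpr hr1]
  · nlinarith [sq_nonneg (S' + a), mul_self_nonneg a, show (0:ℝ) ≤ N by positivity]
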